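/- arXiv:2402.05069 — 2 statements merged into one kernel-verified Lean document; each statement's English description precedes it below -/
import Mathlib

section
/- There is a constant C > 0 (depending only on c) such that for all ε ∈ (0,1] with c√ε < 1 and all t ∈ ℝ, |H_ε(t)| ≤ C + (1/ε²)(1 - a_ε(χ̄(t)) t)², where H_ε is the piecewise primitive defined above, a_ε(0) = 1/(1-c√ε), a_ε(1) = 1, and χ̄(t) = 1 iff t > a*_ε. -/
open MeasureTheory intervalIntegral

lemma stmt7_integrable (a A l u v : ℝ) :
    IntervalIntegrable (fun s => a * |1 - (if A < s then 1 else l) * s|) volume u v := by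
  have hm : Measurable (fun s => a * |1 - (if A < s then 1 else l) * s|) := by
    apply Measurable.mul measurable_const
    apply Measurable.abs
    apply Measurable.sub measurable_const
    exact (Measurable.ite measurableSet_Ioi measurable_const measurable_const).mul measurable_id
  rw [intervalIntegrable_iff]
  apply MeasureTheory.Integrable.mono' (g := fun _ => |a| * (1 + (1 + |l|) * (|u| + |v|)))
    (integrableOn_const measure_Ioc_lt_top.ne)
  · exact hm.aestronglyMeasurable.restrict
  · filter_upwards [ae_restrict_mem measurableSet_Ioc] with s hs
    have hs' : |s| ≤ |u| + |v| := by
      have h1 : min u v < s := hs.1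
      have h2 : s ≤ max u v := hs.2
      have hlo : -(|u| + |v|) ≤ min u v :=
        le_min (by linarith [neg_abs_le u, abs_nonneg v]) (by linarith [neg_abs_le v, abs_nonneg u])
      have hhi : max u v ≤ |u| + |v| :=
        max_le (by linarith [le_abs_self u, abs_nonneg v]) (by linarith [le_abs_self v, abs_nonneg u])
      exact abs_le.mpr ⟨by linarith, by linarith⟩
    rw [Real.norm_eq_abs, abs_mul, abs_abs]
    have hb : |1 - (if A < s then (1:ℝ) else l) * s| ≤ 1 + (1 + |l|) * (|u| + |v|) := by
      calc |1 - (if A < s then (1:ℝ) else l) * s|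
          ≤ |(1:ℝ)| + |(if A < s then (1:ℝ) else l) * s| := abs_sub _ _
        _ ≤ 1 + (1 + |l|) * (|u| + |v|) := by
            rw [abs_one, abs_mul]
            have h3 : |(if A < s then (1:ℝ) else l)| ≤ 1 + |l| := by
              split
              · rw [abs_one]; linarith [abs_nonneg l]
              · linarith [abs_nonneg l, le_abs_self l, neg_abs_le l, abs_nonneg l]
            have := abs_nonneg s
            nlinarith [abs_nonneg (if A < s then (1:ℝ) else l)]
    have ha := abs_nonneg a
    nlinarith [abs_nonneg (1 - (if A < s then (1:ℝ) else l) * s)]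

lemma stmt7_intabs_ge (r x y : ℝ) (h : ∀ s ∈ Set.uIcc x y, r ≤ s) :
    ∫ s in x..y, |s - r| = ((y - r)^2 - (x - r)^2)/2 := by
  rw [intervalIntegral.integral_congr (g := fun s => s - r)
      (fun s hs => abs_of_nonneg (by linarith [h s hs]))]
  rw [intervalIntegral.integral_sub intervalIntegrable_id (intervalIntegrable_const),
    integral_id, intervalIntegral.integral_const]
  simp only [smul_eq_mul]
  ring

lemma stmt7_intabs_le (r x y : ℝ) (h : ∀ s ∈ Set.uIcc x y, s ≤ r) :
    ∫ s in x..y, |s - r| = ((x - r)^2 - (y - r)^2)/2 := by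
  rw [intervalIntegral.integral_congr (g := fun s => r - s)
      (fun s hs => abs_of_nonpos (by linarith [h s hs]) |>.trans (by ring))]
  rw [intervalIntegral.integral_sub intervalIntegrable_const (intervalIntegrable_id),
    integral_id, intervalIntegral.integral_const]
  simp only [smul_eq_mul]
  ring

set_option maxHeartbeats 2000000 in
theorem stmt7 (c : ℝ) (hc : 0 < c) :
    ∃ C : ℝ, 0 < C ∧ ∀ ε : ℝ, 0 < ε → ε ≤ 1 → c * Real.sqrt ε < 1 →
      ∀ t : ℝ,
        abs (∫ s in (1 - c * Real.sqrt ε)..t, Real.sqrt 2 / ε *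
            abs (1 - (if 2 / (1 / (1 - c * Real.sqrt ε) + 1) < s
                  then 1 else 1 / (1 - c * Real.sqrt ε)) * s)) ≤
          C + 1 / ε ^ 2 *
            (1 - (if 2 / (1 / (1 - c * Real.sqrt ε) + 1) < t
                  then 1 else 1 / (1 - c * Real.sqrt ε)) * t) ^ 2 := by
  refine ⟨Real.sqrt 2 * c^2 + 1, by positivity, ?_⟩
  intro ε hε hε1 hδ t
  have hs2 : (0:ℝ) < Real.sqrt 2 := Real.sqrt_pos.mpr (by norm_num)
  have hs2' : Real.sqrt 2 ≤ 2 := by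
    have h := Real.sqrt_le_sqrt (show (2:ℝ) ≤ 4 by norm_num)
    rwa [show (4:ℝ) = 2^2 by norm_num, Real.sqrt_sq (by norm_num : (0:ℝ) ≤ 2)] at h
  have hC0 : (0:ℝ) ≤ Real.sqrt 2 * c^2 := by positivity
  set d := c * Real.sqrt ε with hd
  have hd0 : 0 < d := mul_pos hc (Real.sqrt_pos.mpr hε)
  have hd1 : d < 1 := hδ
  have h1d : 0 < 1 - d := by linarith
  have h2d : 0 < 2 - d := by linarith
  have hde : d^2 = c^2 * ε := by rw [hd, mul_pow, Real.sq_sqrt hε.le]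
  set l := 1 / (1 - d) with hl
  have hl0 : 0 < l := by positivity
  have hl1 : 1 ≤ l := by rw [hl, le_div_iff₀ h1d]; linarith
  have hlinv : l * (1 - d) = 1 := by rw [hl]; field_simp
  set A := 2 / (l + 1) with hA
  have h1d' : (1:ℝ) - d ≠ 0 := ne_of_gt h1d
  have h2d' : (2:ℝ) - d ≠ 0 := ne_of_gt h2d
  have hAe : A = 2*(1-d)/(2-d) := by
    rw [hA, hl]; field_simp; ring
  have hLA : 1 - d ≤ A := by
    rw [hAe, le_div_iff₀ h2d]
    linarith [mul_nonneg hd0.le (show (0:ℝ) ≤ 1 - d by linarith)]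
  have hA1 : A ≤ 1 := by rw [hAe, div_le_one h2d]; linarith
  have hAL : A - (1-d) = d*(1-d)/(2-d) := by rw [hAe]; field_simp; ring
  have h1A : 1 - A = d/(2-d) := by rw [hAe]; field_simp; ring
  -- branch identity
  have hbr : ∀ s : ℝ, |1 - l*s| = l * |s - (1-d)| := by
    intro s
    have h : 1 - l*s = -(l*(s-(1-d))) := by linear_combination -hlinv
    rw [h, abs_neg, abs_mul, abs_of_pos hl0]
  set u := 1/ε with hu
  have hu0 : 0 < u := by positivity
  have hu1 : 1 ≤ u := by rw [hu, le_div_iff₀ hε]; linarith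
  have huε : u * ε = 1 := by rw [hu]; field_simp
  have hF : Real.sqrt 2 / ε = Real.sqrt 2 * u := by rw [hu]; ring
  have hE : 1 / ε^2 = u^2 := by rw [hu]; rw [div_pow]; ring
  -- left-piece congruence
  have hcongrL : ∀ v : ℝ, v ≤ A →
      (∫ s in (1-d)..v, Real.sqrt 2 / ε * |1 - (if A < s then 1 else l) * s|)
        = (Real.sqrt 2 / ε * l) * ∫ s in (1-d)..v, |s - (1-d)| := by
    intro v hv
    rw [← intervalIntegral.integral_const_mul]
    apply intervalIntegral.integral_congr
    intro s hs
    have hsA : s ≤ A := by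
      rcases Set.mem_uIcc.mp hs with ⟨_, h2⟩ | ⟨_, h2⟩
      · linarith
      · linarith
    simp only [if_neg (not_lt.mpr hsA)]
    rw [hbr s]; ring
  rcases le_or_gt t A with htA | htA
  · -- t ≤ A : single branch
    rw [hcongrL t htA, if_neg (not_lt.mpr htA)]
    have hX : (0:ℝ) ≤ (t - (1-d))^2 := sq_nonneg _
    have hsq : (1 - l*t)^2 = l^2 * (t-(1-d))^2 := by
      rw [← sq_abs (1 - l*t), hbr t, mul_pow, sq_abs]
    have hul : 1 ≤ u * l := by
      have h := mul_le_mul hu1 hl1 zero_le_one (by linarith)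
      linarith
    have hkey : Real.sqrt 2 / ε * l * ((t-(1-d))^2/2) ≤ 1/ε^2 * (1 - l*t)^2 := by
      rw [hsq, hF, hE]
      linarith [mul_nonneg (mul_nonneg (sub_nonneg.mpr hul) (mul_nonneg hu0.le hl0.le)) hX,
        mul_nonneg (show (0:ℝ) ≤ 2 - Real.sqrt 2 by linarith)
          (mul_nonneg (mul_nonneg hu0.le hl0.le) hX)]
    rcases le_total (1-d) t with hLt | hLt
    · rw [stmt7_intabs_ge (1-d) (1-d) t (by
        intro s hs
        rcases Set.mem_uIcc.mp hs with ⟨h1, _⟩ | ⟨_, h2⟩ <;> linarith)]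
      rw [show (Real.sqrt 2 / ε * l) * (((t - (1-d))^2 - ((1-d)-(1-d))^2)/2)
            = Real.sqrt 2 / ε * l * ((t-(1-d))^2/2) from by ring,
        abs_of_nonneg (by positivity)]
      linarith [hkey, hC0]
    · rw [stmt7_intabs_le (1-d) (1-d) t (by
        intro s hs
        rcases Set.mem_uIcc.mp hs with ⟨_, h2⟩ | ⟨_, h2⟩ <;> linarith)]
      rw [show (Real.sqrt 2 / ε * l) * ((((1-d)-(1-d))^2 - (t-(1-d))^2)/2)
            = -(Real.sqrt 2 / ε * l * ((t-(1-d))^2/2)) from by ring,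
        abs_neg, abs_of_nonneg (by positivity)]
      linarith [hkey, hC0]
  · -- A < t
    rw [if_pos htA]
    have hsplit : (∫ s in (1-d)..t, Real.sqrt 2 / ε * |1 - (if A < s then 1 else l) * s|)
        = (∫ s in (1-d)..A, Real.sqrt 2 / ε * |1 - (if A < s then 1 else l) * s|)
          + ∫ s in A..t, Real.sqrt 2 / ε * |1 - (if A < s then 1 else l) * s| :=
      (intervalIntegral.integral_add_adjacent_intervals
        (stmt7_integrable _ _ _ _ _) (stmt7_integrable _ _ _ _ _)).symm
    rw [hsplit]
    -- piece 1
    have hp1 : (∫ s in (1-d)..A, Real.sqrt 2 / ε * |1 - (if A < s then 1 else l) * s|)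
        = (Real.sqrt 2 / ε * l) * ((A-(1-d))^2/2) := by
      rw [hcongrL A le_rfl, stmt7_intabs_ge (1-d) (1-d) A (by
        intro s hs
        rcases Set.mem_uIcc.mp hs with ⟨h1, _⟩ | ⟨_, h2⟩ <;> linarith)]
      ring
    have hlAL : l * (A-(1-d))^2 = d^2*(1-d)/(2-d)^2 := by
      rw [hAL, hl]; field_simp
    have hp1b : (Real.sqrt 2 / ε * l) * ((A-(1-d))^2/2) ≤ Real.sqrt 2 / 2 * c^2 := by
      have h1 : l * (A-(1-d))^2 ≤ c^2 * ε := by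
        rw [hlAL, ← hde]
        rw [div_le_iff₀ (by positivity)]
        have hq : (0:ℝ) ≤ 3 - 3*d + d^2 := by linarith [sq_nonneg d]
        linarith [mul_nonneg (sq_nonneg d) hq]
      rw [hF]
      calc Real.sqrt 2 * u * l * ((A-(1-d))^2/2)
          = Real.sqrt 2 * u / 2 * (l * (A-(1-d))^2) := by ring
        _ ≤ Real.sqrt 2 * u / 2 * (c^2 * ε) := by
            apply mul_le_mul_of_nonneg_left h1 (by positivity)
        _ = Real.sqrt 2 / 2 * c^2 * (u * ε) := by ring
        _ = Real.sqrt 2 / 2 * c^2 := by rw [huε]; ring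
    -- piece 2 congruence
    have hjump : |1 - l*A| = |A - 1| := by
      rw [hbr A, abs_of_nonneg (by linarith : (0:ℝ) ≤ A - (1-d)),
        abs_of_nonpos (by linarith : A - 1 ≤ 0)]
      have hla : l * (A - (1-d)) = 1 - A := by
        rw [hAL, h1A, hl]; field_simp
      linarith [hla]
    have hcongrR : (∫ s in A..t, Real.sqrt 2 / ε * |1 - (if A < s then 1 else l) * s|)
        = ∫ s in A..t, Real.sqrt 2 / ε * |s - 1| := by
      apply intervalIntegral.integral_congr
      intro s hs
      have hsmem : A ≤ s ∧ s ≤ t := by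
        rcases Set.mem_uIcc.mp hs with ⟨h1, h2⟩ | ⟨h1, h2⟩
        · exact ⟨h1, h2⟩
        · constructor <;> linarith
      rcases eq_or_lt_of_le hsmem.1 with heq | hlt
      · simp only [← heq, if_neg (lt_irrefl A)]
        rw [hjump]
      · simp only [if_pos hlt, one_mul]
        rw [abs_sub_comm]
    rw [hcongrR]
    have hintc : ∀ x y : ℝ, IntervalIntegrable (fun s => Real.sqrt 2 / ε * |s - 1|) volume x y :=
      fun x y => ((continuous_const.mul
        ((continuous_id.sub continuous_const).abs)).intervalIntegrable x y)
    have hA1sq : (A-1)^2 ≤ c^2 * ε := by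
      have : (A-1)^2 = d^2/(2-d)^2 := by
        have h' : A - 1 = -(d/(2-d)) := by linarith [h1A]
        rw [h', neg_sq, div_pow]
      rw [this, ← hde, div_le_iff₀ (by positivity)]
      linarith [mul_nonneg (sq_nonneg d) (mul_nonneg
        (show (0:ℝ) ≤ 1 - d by linarith) (show (0:ℝ) ≤ 3 - d by linarith))]
    rcases le_or_gt t 1 with ht1 | ht1
    · -- A < t ≤ 1
      have hp2 : (∫ s in A..t, Real.sqrt 2 / ε * |s - 1|)
          = Real.sqrt 2 / ε * (((A-1)^2 - (t-1)^2)/2) := by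
        rw [intervalIntegral.integral_const_mul, stmt7_intabs_le 1 A t (by
          intro s hs
          rcases Set.mem_uIcc.mp hs with ⟨_, h2⟩ | ⟨_, h2⟩ <;> linarith)]
      rw [hp1, hp2]
      have hmono : (t-1)^2 ≤ (A-1)^2 := by
        linarith [mul_nonneg (by linarith : (0:ℝ) ≤ t - A) (by linarith : (0:ℝ) ≤ 2 - A - t)]
      have hp2b : Real.sqrt 2 / ε * (((A-1)^2 - (t-1)^2)/2) ≤ Real.sqrt 2 / 2 * c^2 := by
        rw [hF]
        calc Real.sqrt 2 * u * (((A-1)^2 - (t-1)^2)/2)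
            ≤ Real.sqrt 2 * u / 2 * (A-1)^2 := by
              linarith [mul_nonneg (mul_nonneg hs2.le hu0.le) (sq_nonneg (t-1))]
          _ ≤ Real.sqrt 2 * u / 2 * (c^2 * ε) := by
              apply mul_le_mul_of_nonneg_left hA1sq (by positivity)
          _ = Real.sqrt 2 / 2 * c^2 * (u * ε) := by ring
          _ = Real.sqrt 2 / 2 * c^2 := by rw [huε]; ring
      rw [abs_of_nonneg (add_nonneg (by positivity)
        (mul_nonneg (by positivity) (by linarith [hmono])))]
      have hrhs : (0:ℝ) ≤ 1/ε^2 * (1 - 1*t)^2 := by positivity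
      linarith [hp1b, hp2b, hrhs]
    · -- t > 1
      have hsplit2 : (∫ s in A..t, Real.sqrt 2 / ε * |s - 1|)
          = (∫ s in A..(1:ℝ), Real.sqrt 2 / ε * |s - 1|)
            + ∫ s in (1:ℝ)..t, Real.sqrt 2 / ε * |s - 1| :=
        (intervalIntegral.integral_add_adjacent_intervals (hintc _ _) (hintc _ _)).symm
      have hp2a : (∫ s in A..(1:ℝ), Real.sqrt 2 / ε * |s - 1|)
          = Real.sqrt 2 / ε * ((A-1)^2/2) := by
        rw [intervalIntegral.integral_const_mul, stmt7_intabs_le 1 A 1 (by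
          intro s hs
          rcases Set.mem_uIcc.mp hs with ⟨_, h2⟩ | ⟨_, h2⟩ <;> linarith)]
        norm_num
      have hp2c : (∫ s in (1:ℝ)..t, Real.sqrt 2 / ε * |s - 1|)
          = Real.sqrt 2 / ε * ((t-1)^2/2) := by
        rw [intervalIntegral.integral_const_mul, stmt7_intabs_ge 1 1 t (by
          intro s hs
          rcases Set.mem_uIcc.mp hs with ⟨h1, _⟩ | ⟨_, h2⟩ <;> linarith)]
        norm_num
      rw [hsplit2, hp2a, hp2c, hp1]
      have hp2ab : Real.sqrt 2 / ε * ((A-1)^2/2) ≤ Real.sqrt 2 / 2 * c^2 := by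
        rw [hF]
        calc Real.sqrt 2 * u * ((A-1)^2/2)
            = Real.sqrt 2 * u / 2 * (A-1)^2 := by ring
          _ ≤ Real.sqrt 2 * u / 2 * (c^2 * ε) := by
              apply mul_le_mul_of_nonneg_left hA1sq (by positivity)
          _ = Real.sqrt 2 / 2 * c^2 * (u * ε) := by ring
          _ = Real.sqrt 2 / 2 * c^2 := by rw [huε]; ring
      have hp2cb : Real.sqrt 2 / ε * ((t-1)^2/2) ≤ 1/ε^2 * (1 - 1*t)^2 := by
        rw [hF, hE, one_mul]
        have h1 : (1 - t)^2 = (t-1)^2 := by ring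
        rw [h1]
        linarith [mul_nonneg (mul_nonneg (sub_nonneg.mpr hu1) hu0.le) (sq_nonneg (t-1)),
          mul_nonneg (show (0:ℝ) ≤ 2 - Real.sqrt 2 by linarith)
            (mul_nonneg hu0.le (sq_nonneg (t-1)))]
      rw [abs_of_nonneg (by positivity)]
      linarith [hp1b, hp2ab, hp2cb]
end

section
/- For c > 0, ε_k → 0 with c√ε_k < 1, λ_k = 1/(1-c√ε_k), a*_k = 2/(λ_k+1), suppose M_k, χ_k satisfy ∫_Ω ε_k^{-2}(1 - a_k(χ_k)M_k)² dx ≤ Λ where a_k(0)=λ_k, a_k(1)=1. Let χ̄_k := 1_{{M_k > a*_k}}. Then |{χ̄_k ≠ χ_k}| ≤ Λ ε_k (2 - c√ε_k)²/c², so ‖χ̄_k - χ_k‖_{L¹(Ω)} ≤ C ε_k Λ for C = 4/c². -/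
open MeasureTheory

theorem stmt16 (d : ℕ) (Ω : Set (EuclideanSpace ℝ (Fin d))) (hΩo : IsOpen Ω)
    (hΩb : Bornology.IsBounded Ω) (c Λ εk : ℝ) (hc : 0 < c) (hεk : 0 < εk)
    (hcε : c * Real.sqrt εk < 1) (lam astar : ℝ)
    (hlam : lam = 1 / (1 - c * Real.sqrt εk)) (hastar : astar = 2 / (lam + 1))
    (M χ : EuclideanSpace ℝ (Fin d) → ℝ) (hMmeas : Measurable M) (hχmeas : Measurable χ)
    (hχ01 : ∀ x, χ x = 0 ∨ χ x = 1)
    (hIntegrable : IntegrableOn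
      (fun x => εk⁻¹ ^ 2 * (1 - (if χ x = 0 then lam else 1) * M x) ^ 2) Ω volume)
    (hEn : ∫ x in Ω, εk⁻¹ ^ 2 * (1 - (if χ x = 0 then lam else 1) * M x) ^ 2 ≤ Λ) :
    volume {x ∈ Ω | (if astar < M x then (1:ℝ) else 0) ≠ χ x}
      ≤ ENNReal.ofReal (Λ * εk * (2 - c * Real.sqrt εk) ^ 2 / c ^ 2) ∧
    ∫ x in Ω, |(if astar < M x then (1:ℝ) else 0) - χ x| ≤ 4 / c ^ 2 * εk * Λ := by
  set s : ℝ := c * Real.sqrt εk with hs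
  have hsq : Real.sqrt εk ^ 2 = εk := Real.sq_sqrt hεk.le
  have hs0 : 0 < s := mul_pos hc (Real.sqrt_pos.mpr hεk)
  have hs1 : s < 1 := hcε
  have h1s : (0:ℝ) < 1 - s := by linarith
  have h2s : (0:ℝ) < 2 - s := by linarith
  have hs2 : s ^ 2 = c ^ 2 * εk := by rw [hs, mul_pow, hsq]
  have hlam1 : 1 < lam := by rw [hlam, lt_div_iff₀ h1s]; nlinarith
  have hlamp1 : lam + 1 ≠ 0 := by positivity
  have hastar' : astar = 2 * (1 - s) / (2 - s) := by
    have hd : 1 / (1 - s) + 1 = (2 - s) / (1 - s) := by field_simp; ring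
    rw [hastar, hlam, hd, div_div_eq_mul_div]
  have hkey1 : 1 - astar = s / (2 - s) := by
    rw [hastar']; field_simp; ring
  have hkey2 : lam * astar - 1 = s / (2 - s) := by
    rw [hastar', hlam]; field_simp; ring
  set q : ℝ := s / (2 - s) with hq
  have hq0 : 0 < q := div_pos hs0 h2s
  set f : EuclideanSpace ℝ (Fin d) → ℝ :=
    fun x => εk⁻¹ ^ 2 * (1 - (if χ x = 0 then lam else 1) * M x) ^ 2 with hf
  set b : ℝ := εk⁻¹ ^ 2 * q ^ 2 with hb
  have hb0 : 0 < b := by positivity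
  have hfnn : ∀ x, 0 ≤ f x := fun x => mul_nonneg (by positivity) (sq_nonneg _)
  have hΛ0 : 0 ≤ Λ := le_trans (integral_nonneg fun x => hfnn x) hEn
  -- pointwise lower bound on the bad set
  have hpt : ∀ x, ((if astar < M x then (1:ℝ) else 0) ≠ χ x) → b ≤ f x := by
    intro x hx
    rcases hχ01 x with h0 | h1
    · -- χ x = 0, so indicator = 1, i.e. astar < M x
      have hM : astar < M x := by
        by_contra h
        simp [h, h0] at hx
      have hle : q ≤ lam * M x - 1 := by
        rw [← hkey2]
        have : lam * astar ≤ lam * M x := by nlinarith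
        linarith
      have : q ^ 2 ≤ (1 - lam * M x) ^ 2 := by nlinarith
      simp only [hf, hb, h0, if_pos rfl]
      exact mul_le_mul_of_nonneg_left this (by positivity)
    · -- χ x = 1, so indicator = 0, i.e. M x ≤ astar
      have hM : M x ≤ astar := by
        by_contra h
        push_neg at h
        simp [h, h1] at hx
      have hle : q ≤ 1 - M x := by rw [← hkey1]; linarith
      have : q ^ 2 ≤ (1 - M x) ^ 2 := by nlinarith
      have hne : χ x ≠ 0 := by rw [h1]; norm_num
      simp only [hf, hb, if_neg hne, one_mul]
      exact mul_le_mul_of_nonneg_left this (by positivity)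
  set B : Set (EuclideanSpace ℝ (Fin d)) :=
    {x ∈ Ω | (if astar < M x then (1:ℝ) else 0) ≠ χ x} with hBdef
  have hBsub : B ⊆ {x | b ≤ f x} ∩ Ω := by
    rintro x ⟨hxΩ, hxne⟩
    exact ⟨hpt x hxne, hxΩ⟩
  have hΩfin : volume Ω < ⊤ := hΩb.measure_lt_top
  have hmono : volume B ≤ (volume.restrict Ω) {x | b ≤ f x} := by
    rw [Measure.restrict_apply₀']
    · exact measure_mono hBsub
    · exact hΩo.measurableSet.nullMeasurableSet
  have hBfin : volume B < ⊤ :=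
    lt_of_le_of_lt (measure_mono fun x hx => hx.1) hΩfin
  have hmarkov := mul_meas_ge_le_integral_of_nonneg
    (μ := volume.restrict Ω) (f := f) (ae_of_all _ hfnn) hIntegrable b
  have hrestr_fin : (volume.restrict Ω) {x | b ≤ f x} < ⊤ := by
    rw [Measure.restrict_apply₀' hΩo.measurableSet.nullMeasurableSet]
    exact lt_of_le_of_lt (measure_mono Set.inter_subset_right) hΩfin
  have htoReal : (volume B).toReal ≤ ((volume.restrict Ω) {x | b ≤ f x}).toReal :=
    ENNReal.toReal_mono hrestr_fin.ne hmono
  have hchain : b * (volume B).toReal ≤ Λ := by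
    calc b * (volume B).toReal ≤ b * ((volume.restrict Ω) {x | b ≤ f x}).toReal :=
          mul_le_mul_of_nonneg_left htoReal hb0.le
      _ ≤ ∫ x, f x ∂(volume.restrict Ω) := hmarkov
      _ ≤ Λ := hEn
  have hb_eq : b = c ^ 2 / (εk * (2 - s) ^ 2) := by
    have hss : (s / (2 - s)) ^ 2 = c ^ 2 * εk / (2 - s) ^ 2 := by rw [div_pow, hs2]
    rw [hb, hq, hss]
    field_simp
  have htarget : (volume B).toReal ≤ Λ * εk * (2 - s) ^ 2 / c ^ 2 := by
    have hΛb : Λ * εk * (2 - s) ^ 2 / c ^ 2 = Λ / b := by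
      rw [hb_eq]; field_simp
    rw [hΛb, le_div_iff₀ hb0, mul_comm]
    exact hchain
  have hmeas_bound : volume B ≤ ENNReal.ofReal (Λ * εk * (2 - s) ^ 2 / c ^ 2) := by
    rw [← ENNReal.ofReal_toReal hBfin.ne]
    exact ENNReal.ofReal_le_ofReal htarget
  refine ⟨hmeas_bound, ?_⟩
  -- second part
  set g : EuclideanSpace ℝ (Fin d) → ℝ :=
    fun x => |(if astar < M x then (1:ℝ) else 0) - χ x| with hg
  have hSmeas : MeasurableSet {x | (if astar < M x then (1:ℝ) else 0) ≠ χ x} := by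
    have h1 : Measurable fun x => (if astar < M x then (1:ℝ) else 0) :=
      Measurable.ite (measurableSet_lt measurable_const hMmeas) measurable_const
        measurable_const
    exact (measurableSet_eq_fun h1 hχmeas).compl
  have hgind : g = Set.indicator {x | (if astar < M x then (1:ℝ) else 0) ≠ χ x}
      (fun _ => (1:ℝ)) := by
    funext x
    by_cases hx : (if astar < M x then (1:ℝ) else 0) = χ x
    · rw [Set.indicator_of_notMem (not_not_intro hx)]
      simp [hg, hx]
    · rw [Set.indicator_of_mem
        (show x ∈ {x | (if astar < M x then (1:ℝ) else 0) ≠ χ x} from hx)]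
      rcases hχ01 x with h0 | h1
      · have : astar < M x := by by_contra h; simp [h, h0] at hx
        simp [hg, this, h0]
      · have : ¬ astar < M x := by intro h; simp [h, h1] at hx
        simp [hg, this, h1]
  have hint : ∫ x in Ω, g x = (volume B).toReal := by
    rw [hgind, setIntegral_indicator hSmeas]
    rw [setIntegral_const]
    have : Ω ∩ {x | (if astar < M x then (1:ℝ) else 0) ≠ χ x} = B := by
      ext x; simp [hBdef, Set.mem_setOf_eq, Set.mem_inter_iff]
    rw [this, smul_eq_mul, mul_one]
    rfl
  rw [hint]
  have h2s4 : (2 - s) ^ 2 ≤ 4 := by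
    calc (2 - s) ^ 2 ≤ 2 ^ 2 := pow_le_pow_left₀ h2s.le (by linarith) 2
      _ = 4 := by norm_num
  calc (volume B).toReal ≤ Λ * εk * (2 - s) ^ 2 / c ^ 2 := htarget
    _ ≤ 4 / c ^ 2 * εk * Λ := by
        have h4 : 4 / c ^ 2 * εk * Λ = Λ * εk * 4 / c ^ 2 := by ring
        rw [h4]
        have hle : Λ * εk * (2 - s) ^ 2 ≤ Λ * εk * 4 :=
          mul_le_mul_of_nonneg_left h2s4 (mul_nonneg hΛ0 hεk.le)
        exact (div_le_div_iff_of_pos_right (by positivity)).mpr hle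
end
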